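/- The number c(n) of permutations of [n] avoiding the generalized pattern 12-3 satisfies the recurrence c(n-1) = Σ_{j=0}^{n-1} (-1)^{n-1-j} · binom(n-1, j) · c(j+1) for all n ≥ 3; equivalently, c(n) equals the n-th Bell number. -/

import Mathlib

/-- The Bell numbers: `bell n` is the number of set partitions of `[n]`. -/
def bell : ℕ → ℕ
  | 0 => 1
  | n + 1 => ∑ k ∈ (Finset.range (n + 1)).attach, Nat.choose n k * bell k
decreasing_by
  have := Finset.mem_range.mp k.2; omega

/-- `π` contains an occurrence of the generalized pattern `12-3`:
an index `i` with `i + 1 < j ≤ n` and `π i < π (i+1) < π j`. -/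
def Occ12_3 {n : ℕ} (π : Equiv.Perm (Fin n)) : Prop :=
  ∃ i j : Fin n, ∃ hi : (i : ℕ) + 1 < n,
    (i : ℕ) + 1 < (j : ℕ) ∧ π i < π ⟨(i : ℕ) + 1, hi⟩ ∧ π ⟨(i : ℕ) + 1, hi⟩ < π j

/-- `c(n)`: the number of permutations of `[n]` avoiding `12-3`. -/
noncomputable def c12_3 (n : ℕ) : ℕ :=
  Nat.card {π : Equiv.Perm (Fin n) // ¬ Occ12_3 π}

/-- Recursive characterization of containing 12-3 for a word (list of naturals). -/
def OccL : List ℕ → Prop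
  | a :: b :: l => (a < b ∧ ∃ c ∈ l, b < c) ∨ OccL (b :: l)
  | _ => False

instance : DecidablePred OccL := fun l => by
  match l with
  | [] => exact .isFalse (by simp [OccL])
  | [a] => exact .isFalse (by simp [OccL])
  | a :: b :: l =>
    have := instDecidablePredListNatOccL (b :: l)
    exact decidable_of_iff _ (by rw [OccL])

theorem mem_iff_getD {l : List ℕ} {x : ℕ} :
    x ∈ l ↔ ∃ k, k < l.length ∧ l.getD k 0 = x := by
  rw [List.mem_iff_getElem]
  constructor
  · rintro ⟨k, h, rfl⟩
    exact ⟨k, h, List.getD_eq_getElem _ _ h⟩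
  · rintro ⟨k, h, hk⟩
    exact ⟨k, h, by rw [← List.getD_eq_getElem _ _ h, hk]⟩

/-- Index-based version matching `Occ12_3`. -/
theorem occL_iff (l : List ℕ) : OccL l ↔
    ∃ i j : ℕ, i + 1 < j ∧ j < l.length ∧
      l.getD i 0 < l.getD (i + 1) 0 ∧ l.getD (i + 1) 0 < l.getD j 0 := by
  match l with
  | [] => simp [OccL]
  | [a] => simp only [OccL, List.length_singleton]; constructor
           · rintro ⟨⟩
           · rintro ⟨i, j, h1, h2, -⟩; omega
  | a :: b :: l =>
    rw [OccL, occL_iff (b :: l)]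
    constructor
    · rintro (⟨hab, c, hc, hbc⟩ | ⟨i, j, h1, h2, h3, h4⟩)
      · obtain ⟨k, hk, hkc⟩ := mem_iff_getD.mp hc
        refine ⟨0, k + 2, by omega, by simp; omega, by simpa using hab, ?_⟩
        simp only [List.getD_cons_succ]
        rw [hkc]; exact hbc
      · exact ⟨i + 1, j + 1, by omega, by simp at h2 ⊢; omega, by simpa using h3,
          by simpa using h4⟩
    · rintro ⟨i, j, h1, h2, h3, h4⟩
      match i with
      | 0 =>
        left
        refine ⟨by simpa using h3, (a :: b :: l).getD j 0, ?_, by simpa using h4⟩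
        · match j, h1 with
          | (k+2), _ => exact mem_iff_getD.mpr ⟨k, by simp at h2 ⊢; omega, by simp⟩
      | i + 1 =>
        refine Or.inr ⟨i, j - 1, by omega, by simp at h2 ⊢; omega, by simpa using h3, ?_⟩
        match j, h1 with
        | (k+1), _ => simpa using h4

theorem occL_nil : ¬ OccL [] := by simp [OccL]

theorem occL_cons_max {n : ℕ} {t : List ℕ} (ht : ∀ x ∈ t, x < n) :
    OccL (n :: t) ↔ OccL t := by
  match t with
  | [] => simp [OccL]
  | b :: t =>
    rw [OccL]
    simp only [or_iff_right_iff_imp]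
    rintro ⟨h, -⟩
    exact absurd h (by simp [Nat.not_lt.2 (ht b (by simp)).le])

theorem occL_append {n : ℕ} {d t : List ℕ} (hnd : d.Nodup)
    (hd : ∀ x ∈ d, x < n) (ht : ∀ x ∈ t, x < n) :
    ¬ OccL (d ++ n :: t) ↔ List.Chain' (· > ·) d ∧ ¬ OccL t := by
  match d with
  | [] => simp [occL_cons_max ht, List.Chain']
  | [a] =>
    have : OccL (a :: n :: t) ↔ OccL t := by
      rw [OccL, occL_cons_max ht]
      simp only [or_iff_right_iff_imp]
      rintro ⟨-, c, hc, hnc⟩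
      exact absurd hnc (by simp [Nat.not_lt.2 (ht c hc).le])
    simp [this, List.Chain']
  | a :: b :: d =>
    have hab : a ≠ b := by simp at hnd; tauto
    have key : OccL (a :: b :: (d ++ n :: t)) ↔ (a < b) ∨ OccL (b :: (d ++ n :: t)) := by
      rw [OccL]
      constructor
      · rintro (⟨h, -⟩ | h)
        · exact Or.inl h
        · exact Or.inr h
      · rintro (h | h)
        · exact Or.inl ⟨h, n, by simp, hd b (by simp)⟩
        · exact Or.inr h
    simp only [List.cons_append]
    rw [key]
    have ih := occL_append (d := b :: d) (n := n) (t := t) (by simp at hnd ⊢; tauto)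
      (fun x hx => hd x (by simp at hx ⊢; tauto)) ht
    simp only [List.cons_append] at ih
    rw [List.Chain', List.isChain_cons_cons]
    constructor
    · intro h
      push_neg at h
      obtain ⟨h1, h2⟩ := h
      have := ih.mp h2
      exact ⟨⟨by omega, this.1⟩, this.2⟩
    · rintro ⟨⟨h1, h2⟩, h3⟩
      rw [not_or, ih]
      exact ⟨by omega, h2, h3⟩

theorem occL_map {S : Set ℕ} {φ : ℕ → ℕ} (hφ : StrictMonoOn φ S) :
    ∀ {l : List ℕ}, (∀ x ∈ l, x ∈ S) → (OccL (l.map φ) ↔ OccL l) := by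
  intro l
  match l with
  | [] => simp [OccL]
  | [a] => simp [OccL]
  | a :: b :: l =>
    intro hl
    have ha : a ∈ S := hl a (by simp)
    have hb : b ∈ S := hl b (by simp)
    have hrest : ∀ x ∈ b :: l, x ∈ S := fun x hx => hl x (by simp at hx ⊢; tauto)
    simp only [List.map_cons, OccL]
    have ih := occL_map hφ hrest
    simp only [List.map_cons] at ih
    rw [ih]
    have h1 : φ a < φ b ↔ a < b := ⟨fun h => by
      by_contra hc
      exact absurd h (by simp [hφ.le_iff_le hb ha |>.mpr (by omega)]),
      fun h => hφ ha hb h⟩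
    have h2 : (∃ c ∈ l.map φ, φ b < c) ↔ (∃ c ∈ l, b < c) := by
      simp only [List.mem_map]
      constructor
      · rintro ⟨-, ⟨c, hc, rfl⟩, hbc⟩
        refine ⟨c, hc, ?_⟩
        by_contra hcb
        exact absurd hbc (by simp [hφ.le_iff_le (hrest c (by simp [hc])) hb |>.mpr (by omega)])
      · rintro ⟨c, hc, hbc⟩
        exact ⟨φ c, ⟨c, hc, rfl⟩, hφ hb (hrest c (by simp [hc])) hbc⟩
    rw [h1, h2]

noncomputable def avoSet (S : Finset ℕ) : Finset (List ℕ) :=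
  S.toList.permutations.toFinset.filter (fun l => ¬ OccL l)

theorem mem_avoSet {S : Finset ℕ} {l : List ℕ} :
    l ∈ avoSet S ↔ (l.Nodup ∧ l.toFinset = S) ∧ ¬ OccL l := by
  rw [avoSet, Finset.mem_filter, List.mem_toFinset, List.mem_permutations]
  constructor
  · rintro ⟨h1, h2⟩
    exact ⟨⟨h1.symm.nodup S.nodup_toList, by
      rw [List.toFinset_eq_of_perm _ _ h1, Finset.toList_toFinset]⟩, h2⟩
  · rintro ⟨⟨h1, h2⟩, h3⟩
    refine ⟨List.perm_of_nodup_nodup_toFinset_eq h1 S.nodup_toList ?_, h3⟩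
    rw [h2, Finset.toList_toFinset]

theorem avoSet_card_eq {S T : Finset ℕ} (h : S.card = T.card) :
    (avoSet S).card = (avoSet T).card := by
  set k := S.card with hk
  have eS := S.orderIsoOfFin hk.symm
  have eT := T.orderIsoOfFin (by omega : T.card = k)
  set φ : ℕ → ℕ := fun x => if hx : x ∈ S then (eT (eS.symm ⟨x, hx⟩) : ℕ) else 0 with hφdef
  set ψ : ℕ → ℕ := fun x => if hx : x ∈ T then (eS (eT.symm ⟨x, hx⟩) : ℕ) else 0 with hψdef
  have hφS : ∀ x (hx : x ∈ S), φ x = (eT (eS.symm ⟨x, hx⟩) : ℕ) := fun x hx => by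
    simp [hφdef, hx]
  have hψT : ∀ x (hx : x ∈ T), ψ x = (eS (eT.symm ⟨x, hx⟩) : ℕ) := fun x hx => by
    simp [hψdef, hx]
  have hφmem : ∀ x ∈ S, φ x ∈ T := fun x hx => by rw [hφS x hx]; exact (eT _).2
  have hψmem : ∀ x ∈ T, ψ x ∈ S := fun x hx => by rw [hψT x hx]; exact (eS _).2
  have hψφ : ∀ x ∈ S, ψ (φ x) = x := fun x hx => by
    have heq : (⟨φ x, hφmem x hx⟩ : {y // y ∈ T}) = eT (eS.symm ⟨x, hx⟩) :=
      Subtype.ext (hφS x hx)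
    rw [hψT (φ x) (hφmem x hx), heq]
    simp
  have hφψ : ∀ x ∈ T, φ (ψ x) = x := fun x hx => by
    have heq : (⟨ψ x, hψmem x hx⟩ : {y // y ∈ S}) = eS (eT.symm ⟨x, hx⟩) :=
      Subtype.ext (hψT x hx)
    rw [hφS (ψ x) (hψmem x hx), heq]
    simp
  have hφmono : StrictMonoOn φ S := by
    intro x hx y hy hxy
    rw [hφS x hx, hφS y hy]
    have : eS.symm ⟨x, hx⟩ < eS.symm ⟨y, hy⟩ := by
      rw [← eS.lt_iff_lt] at *
      simpa using hxy
    exact eT.strictMono this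
  have hψmono : StrictMonoOn ψ T := by
    intro x hx y hy hxy
    rw [hψT x hx, hψT y hy]
    have : eT.symm ⟨x, hx⟩ < eT.symm ⟨y, hy⟩ := by
      rw [← eT.lt_iff_lt] at *
      simpa using hxy
    exact eS.strictMono this
  have memmap : ∀ (U V : Finset ℕ) (χ : ℕ → ℕ), U.card = V.card →
      (∀ x ∈ U, χ x ∈ V) → StrictMonoOn χ U → ∀ l ∈ avoSet U, l.map χ ∈ avoSet V := by
    intro U V χ hcard hmem hmono l hl
    rw [mem_avoSet] at hl ⊢
    obtain ⟨⟨h1, h2⟩, h3⟩ := hl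
    have hlU : ∀ x ∈ l, x ∈ U := fun x hx => h2 ▸ List.mem_toFinset.mpr hx
    have hnodup : (l.map χ).Nodup := h1.map_on (fun x hx y hy hxy =>
      hmono.injOn (hlU x hx) (hlU y hy) hxy)
    refine ⟨⟨hnodup, ?_⟩, fun hocc => h3 ((occL_map hmono (fun x hx => hlU x hx)).mp hocc)⟩
    have hsub : (l.map χ).toFinset ⊆ V := by
      intro x hx
      simp only [List.mem_toFinset, List.mem_map] at hx
      obtain ⟨y, hy, rfl⟩ := hx
      exact hmem y (hlU y hy)
    refine Finset.eq_of_subset_of_card_le hsub ?_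
    rw [List.toFinset_card_of_nodup hnodup, List.length_map,
      ← List.toFinset_card_of_nodup h1, h2, hcard]
  refine Finset.card_bij' (fun l _ => l.map φ) (fun l _ => l.map ψ)
    (memmap S T φ h hφmem hφmono) (memmap T S ψ h.symm hψmem hψmono) ?_ ?_
  · intro l hl
    rw [mem_avoSet] at hl
    show (l.map φ).map ψ = l
    rw [List.map_map]
    have : ∀ x ∈ l, (ψ ∘ φ) x = x := fun x hx => hψφ x (hl.1.2 ▸ List.mem_toFinset.mpr hx)
    rw [List.map_congr_left this]; exact List.map_id l
  · intro l hl
    rw [mem_avoSet] at hl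
    show (l.map ψ).map φ = l
    rw [List.map_map]
    have : ∀ x ∈ l, (φ ∘ ψ) x = x := fun x hx => hφψ x (hl.1.2 ▸ List.mem_toFinset.mpr hx)
    rw [List.map_congr_left this]; exact List.map_id l

noncomputable def F (n : ℕ) : ℕ := (avoSet (Finset.range n)).card

instance : IsAntisymm ℕ (· > ·) := ⟨fun a b h1 h2 => by omega⟩

/-- descending sort of a finset -/
noncomputable def desc (D : Finset ℕ) : List ℕ := (D.sort (· ≤ ·)).reverse

theorem desc_toFinset (D : Finset ℕ) : (desc D).toFinset = D := by
  rw [desc, List.toFinset_reverse, Finset.sort_toFinset]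

theorem desc_nodup (D : Finset ℕ) : (desc D).Nodup := by
  rw [desc, List.nodup_reverse]; exact Finset.sort_nodup ..

theorem desc_sorted (D : Finset ℕ) : List.Pairwise (· > ·) (desc D) := by
  rw [desc, List.pairwise_reverse]
  exact (Finset.sortedLT_sort D).pairwise

theorem desc_chain' (D : Finset ℕ) : List.Chain' (· > ·) (desc D) :=
  List.isChain_iff_pairwise.mpr (desc_sorted D)

theorem desc_unique {d : List ℕ} (h1 : d.Nodup) (h2 : List.Chain' (· > ·) d) :
    desc d.toFinset = d := by
  refine List.Perm.eq_of_pairwise (fun a b _ _ h1 h2 => by omega) (desc_sorted _) (List.isChain_iff_pairwise.mp h2) ?_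
  exact List.perm_of_nodup_nodup_toFinset_eq (desc_nodup _) h1 (desc_toFinset _)

theorem mem_desc {D : Finset ℕ} {x : ℕ} : x ∈ desc D ↔ x ∈ D := by
  rw [← desc_toFinset D, List.mem_toFinset, desc_toFinset]

/-- splitting a list at `n` using takeWhile/dropWhile -/
theorem take_drop_split {n : ℕ} : ∀ {l : List ℕ}, n ∈ l →
    l = l.takeWhile (· != n) ++ n :: (l.dropWhile (· != n)).drop 1 := by
  intro l hl
  match l with
  | [] => simp at hl
  | a :: l =>
    by_cases ha : a = n
    · subst ha
      simp [List.takeWhile_cons, List.dropWhile_cons]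
    · have hn : n ∈ l := by simp at hl; tauto
      have hb : (a != n) = true := by simpa using ha
      rw [List.takeWhile_cons, List.dropWhile_cons]
      simp only [hb, if_true]
      rw [List.cons_append]
      exact congrArg (a :: ·) (take_drop_split hn)

theorem takeWhile_append {n : ℕ} (d t : List ℕ) (hd : ∀ x ∈ d, x ≠ n) :
    (d ++ n :: t).takeWhile (· != n) = d ∧ (d ++ n :: t).dropWhile (· != n) = n :: t := by
  match d with
  | [] => simp [List.takeWhile_cons, List.dropWhile_cons]
  | a :: d =>
    have hb : (a != n) = true := by simpa using hd a (by simp)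
    have ih := takeWhile_append (n := n) d t (fun x hx => hd x (by simp [hx]))
    simp only [List.cons_append, List.takeWhile_cons, List.dropWhile_cons, hb, if_true]
    exact ⟨congrArg (a :: ·) ih.1, ih.2⟩

theorem F_rec (n : ℕ) : F (n + 1) = ∑ k ∈ Finset.range (n + 1), Nat.choose n k * F k := by
  classical
  have hfib : ∀ l ∈ avoSet (Finset.range (n + 1)),
      (l.takeWhile (· != n)).toFinset ∈ (Finset.range n).powerset := by
    intro l hl
    rw [Finset.mem_powerset]
    intro x hx
    rw [List.mem_toFinset] at hx
    have h1 : x ≠ n := by simpa using List.mem_takeWhile_imp hx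
    have h2 : x ∈ l := (List.takeWhile_prefix _).mem hx
    have h3 : x ∈ Finset.range (n + 1) := (mem_avoSet.mp hl).1.2 ▸ List.mem_toFinset.mpr h2
    rw [Finset.mem_range] at h3 ⊢
    omega
  have hcard := Finset.card_eq_sum_card_fiberwise hfib
  rw [F, hcard]
  -- fiber cardinality
  have hfiber : ∀ D ∈ (Finset.range n).powerset,
      ((avoSet (Finset.range (n + 1))).filter
        (fun l => (l.takeWhile (· != n)).toFinset = D)).card
        = F (n - D.card) := by
    intro D hD
    rw [Finset.mem_powerset] at hD
    have hDn : ∀ x ∈ D, x < n := fun x hx => Finset.mem_range.mp (hD hx)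
    have key : ∀ l, l ∈ (avoSet (Finset.range (n + 1))).filter
        (fun l => (l.takeWhile (· != n)).toFinset = D) →
        (l.takeWhile (· != n)).Nodup ∧ (∀ x ∈ l.takeWhile (· != n), x < n) ∧
        (∀ x ∈ (l.dropWhile (· != n)).drop 1, x < n) ∧
        l = l.takeWhile (· != n) ++ n :: (l.dropWhile (· != n)).drop 1 ∧
        List.Chain' (· > ·) (l.takeWhile (· != n)) ∧
        ¬ OccL ((l.dropWhile (· != n)).drop 1) ∧
        ((l.dropWhile (· != n)).drop 1).toFinset = Finset.range n \ D := by
      intro l hl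
      rw [Finset.mem_filter] at hl
      obtain ⟨hl1, hl2⟩ := hl
      rw [mem_avoSet] at hl1
      obtain ⟨⟨hnd, htf⟩, hocc⟩ := hl1
      set d := l.takeWhile (· != n) with hd
      set t := (l.dropWhile (· != n)).drop 1 with ht
      have hmeml : ∀ x ∈ l, x < n + 1 := fun x hx =>
        Finset.mem_range.mp (htf ▸ List.mem_toFinset.mpr hx)
      have hnl : n ∈ l := List.mem_toFinset.mp (htf ▸ Finset.self_mem_range_succ n)
      have hsplit : l = d ++ n :: t := take_drop_split hnl
      have hdn : ∀ x ∈ d, x < n := by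
        intro x hx
        have h1 : x ≠ n := by simpa using List.mem_takeWhile_imp hx
        have h2 : x < n + 1 := hmeml x ((List.takeWhile_prefix _).mem hx)
        omega
      have hndl : (d ++ n :: t).Nodup := hsplit ▸ hnd
      rw [List.nodup_append] at hndl
      obtain ⟨hnd2, hnt2, hdisj⟩ := hndl
      have htn : ∀ x ∈ t, x < n := by
        intro x hx
        have h2 : x < n + 1 := hmeml x (hsplit ▸ (by
          rw [List.mem_append]; exact Or.inr (by simp [hx])))
        have : x ≠ n := fun h => (List.nodup_cons.mp hnt2).1 (h ▸ hx)
        omega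
      have hocc2 : ¬ OccL (d ++ n :: t) := hsplit ▸ hocc
      rw [occL_append hnd2 hdn htn] at hocc2
      refine ⟨hnd2, hdn, htn, hsplit, hocc2.1, hocc2.2, ?_⟩
      ext x
      simp only [List.mem_toFinset, Finset.mem_sdiff, Finset.mem_range]
      constructor
      · intro hx
        refine ⟨htn x hx, fun hxD => ?_⟩
        have : x ∈ d := by rw [← hl2] at hxD; exact List.mem_toFinset.mp hxD
        exact hdisj x this x (by simp [hx]) rfl
      · rintro ⟨hx1, hx2⟩
        have : x ∈ l := List.mem_toFinset.mp (htf ▸ Finset.mem_range.mpr (by omega))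
        rw [hsplit, List.mem_append, List.mem_cons] at this
        rcases this with h | h | h
        · exact absurd (by rw [← hl2]; exact List.mem_toFinset.mpr h) hx2
        · omega
        · exact h
    rw [show F (n - D.card) = (avoSet (Finset.range n \ D)).card from
      (avoSet_card_eq (by rw [Finset.card_sdiff_of_subset hD, Finset.card_range, Finset.card_range])).symm]
    refine Finset.card_bij' (fun l _ => (l.dropWhile (· != n)).drop 1)
      (fun t _ => desc D ++ n :: t) ?_ ?_ ?_ ?_
    · intro l hl
      obtain ⟨h1, h2, h3, h4, h5, h6, h7⟩ := key l hl
      rw [mem_avoSet]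
      have hndl := hl
      rw [Finset.mem_filter, mem_avoSet] at hndl
      have : (l.takeWhile (· != n) ++ n :: (l.dropWhile (· != n)).drop 1).Nodup :=
        h4 ▸ hndl.1.1.1
      rw [List.nodup_append, List.nodup_cons] at this
      exact ⟨⟨this.2.1.2, h7⟩, h6⟩
    · intro t ht
      rw [mem_avoSet] at ht
      obtain ⟨⟨htnd, httf⟩, htocc⟩ := ht
      have htmem : ∀ x ∈ t, x < n ∧ x ∉ D := by
        intro x hx
        have := httf ▸ List.mem_toFinset.mpr hx
        rw [Finset.mem_sdiff, Finset.mem_range] at this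
        exact this
      have hdesc : ∀ x ∈ desc D, x < n := fun x hx => hDn x (mem_desc.mp hx)
      rw [Finset.mem_filter, mem_avoSet]
      refine ⟨⟨⟨?_, ?_⟩, ?_⟩, ?_⟩
      · rw [List.nodup_append, List.nodup_cons]
        refine ⟨desc_nodup D, ⟨fun hn => by have := (htmem n hn).1; omega, htnd⟩, ?_⟩
        intro x hx y hx2 hxy
        subst hxy
        rw [List.mem_cons] at hx2
        have hxD := mem_desc.mp hx
        rcases hx2 with rfl | hx2
        · exact absurd (hDn x hxD) (lt_irrefl x)
        · exact (htmem x hx2).2 hxD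
      · rw [List.toFinset_append, List.toFinset_cons, desc_toFinset, httf]
        ext x
        simp only [Finset.mem_union, Finset.mem_insert, Finset.mem_sdiff, Finset.mem_range]
        constructor
        · rintro (h | rfl | ⟨h1, h2⟩) <;> first | omega | exact (by have := hDn x h; omega)
        · intro hx
          by_cases hxD : x ∈ D
          · exact Or.inl hxD
          · by_cases hxn : x = n
            · exact Or.inr (Or.inl hxn)
            · exact Or.inr (Or.inr ⟨by omega, hxD⟩)
      · rw [occL_append (desc_nodup D) hdesc (fun x hx => (htmem x hx).1)]
        exact ⟨desc_chain' D, htocc⟩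
      · rw [(takeWhile_append (desc D) t (fun x hx => by
          have := hdesc x hx; omega)).1, desc_toFinset]
    · intro l hl
      obtain ⟨h1, h2, h3, h4, h5, h6, h7⟩ := key l hl
      have hlD : (l.takeWhile (· != n)).toFinset = D := (Finset.mem_filter.mp hl).2
      show desc D ++ n :: (l.dropWhile (· != n)).drop 1 = l
      conv_rhs => rw [h4]
      rw [← hlD, desc_unique h1 h5]
    · intro t ht
      show ((desc D ++ n :: t).dropWhile (· != n)).drop 1 = t
      rw [(takeWhile_append (desc D) t (fun x hx => by
        have := hDn x (mem_desc.mp hx); omega)).2]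
      simp
  calc ∑ D ∈ (Finset.range n).powerset,
        ((avoSet (Finset.range (n + 1))).filter
          (fun l => (l.takeWhile (· != n)).toFinset = D)).card
      = ∑ D ∈ (Finset.range n).powerset, F (n - D.card) := Finset.sum_congr rfl hfiber
    _ = ∑ k ∈ Finset.range (n + 1), ∑ D ∈ Finset.powersetCard k (Finset.range n),
          F (n - D.card) := by
        rw [Finset.sum_powerset]
        simp only [Finset.card_range]
    _ = ∑ k ∈ Finset.range (n + 1), Nat.choose n k * F (n - k) := by
        refine Finset.sum_congr rfl fun k hk => ?_
        rw [Finset.sum_congr rfl (fun D hD => by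
          rw [(Finset.mem_powersetCard.mp hD).2]), Finset.sum_const,
          Finset.card_powersetCard, Finset.card_range, smul_eq_mul]
    _ = ∑ k ∈ Finset.range (n + 1), Nat.choose n k * F k := by
        rw [← Finset.sum_range_reflect]
        refine Finset.sum_congr rfl fun k hk => ?_
        rw [Finset.mem_range] at hk
        have h1 : n + 1 - 1 - k = n - k := by omega
        rw [h1, Nat.choose_symm (by omega : k ≤ n), show n - (n - k) = k by omega]

theorem getD_ofFn {n : ℕ} (f : Fin n → ℕ) (k : ℕ) (hk : k < n) :
    (List.ofFn f).getD k 0 = f ⟨k, hk⟩ := by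
  rw [List.getD_eq_getElem _ _ (by simpa using hk)]
  simp

theorem occ_iff_occL {n : ℕ} (σ : Equiv.Perm (Fin n)) :
    Occ12_3 σ ↔ OccL (List.ofFn (fun i : Fin n => (σ i : ℕ))) := by
  rw [occL_iff]
  constructor
  · rintro ⟨i, j, hi, hij, h1, h2⟩
    refine ⟨i, j, hij, by simp, ?_, ?_⟩
    · rw [getD_ofFn _ _ (by omega), getD_ofFn _ _ hi]
      exact h1
    · rw [getD_ofFn _ _ hi, getD_ofFn _ _ j.2]
      exact h2
  · rintro ⟨i, j, hij, hj, h1, h2⟩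
    rw [List.length_ofFn] at hj
    have hi : i + 1 < n := by omega
    refine ⟨⟨i, by omega⟩, ⟨j, hj⟩, hi, hij, ?_, ?_⟩
    · rw [getD_ofFn _ _ (by omega : i < n), getD_ofFn _ _ hi] at h1
      exact h1
    · rw [getD_ofFn _ _ hi, getD_ofFn _ _ hj] at h2
      exact h2

theorem c12_3_eq_F (n : ℕ) : c12_3 n = F n := by
  classical
  rw [c12_3, Nat.card_eq_fintype_card, Fintype.card_subtype]
  refine Finset.card_bij (fun σ _ => List.ofFn (fun i : Fin n => (σ i : ℕ))) ?_ ?_ ?_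
  · intro σ hσ
    rw [Finset.mem_filter] at hσ
    rw [mem_avoSet]
    refine ⟨⟨List.nodup_ofFn.mpr (fun a b hab => σ.injective (Fin.ext hab)), ?_⟩, ?_⟩
    · ext x
      simp only [List.mem_toFinset, List.mem_ofFn, Finset.mem_range, Set.mem_range]
      constructor
      · rintro ⟨i, rfl⟩; exact (σ i).2
      · intro hx; exact ⟨σ.symm ⟨x, hx⟩, by simp⟩
    · rw [← occ_iff_occL]; exact hσ.2
  · intro σ hσ τ hτ h
    rw [List.ofFn_inj] at h
    exact Equiv.ext fun i => Fin.ext (congrFun h i)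
  · intro l hl
    rw [mem_avoSet] at hl
    obtain ⟨⟨hnd, htf⟩, hocc⟩ := hl
    have hlen : l.length = n := by
      rw [← List.toFinset_card_of_nodup hnd, htf, Finset.card_range]
    have hmem : ∀ k (hk : k < n), l.getD k 0 < n := by
      intro k hk
      have : l.getD k 0 ∈ l := mem_iff_getD.mpr ⟨k, by omega, rfl⟩
      have := htf ▸ List.mem_toFinset.mpr this
      exact Finset.mem_range.mp this
    set g : Fin n → Fin n := fun i => ⟨l.getD i 0, hmem i i.2⟩ with hg
    have hginj : Function.Injective g := by
      intro a b hab
      have h2 : l.getD a 0 = l.getD b 0 := congrArg Fin.val hab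
      rw [List.getD_eq_getElem _ _ (by omega : (a:ℕ) < l.length),
        List.getD_eq_getElem _ _ (by omega : (b:ℕ) < l.length)] at h2
      have := List.nodup_iff_injective_get.mp hnd
        (show l.get ⟨a, by omega⟩ = l.get ⟨b, by omega⟩ by simpa using h2)
      exact Fin.ext (by simpa using congrArg Fin.val this)
    set σ := Equiv.ofBijective g (Finite.injective_iff_bijective.mp hginj) with hσ
    have hofn : List.ofFn (fun i : Fin n => (σ i : ℕ)) = l := by
      refine List.ext_getElem (by simpa using hlen.symm) ?_
      intro k h1 h2
      rw [List.getElem_ofFn]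
      show (g _ : ℕ) = l[k]
      rw [hg]
      simp only
      rw [List.getD_eq_getElem _ _ (by omega)]
    refine ⟨σ, ?_, hofn⟩
    rw [Finset.mem_filter]
    refine ⟨Finset.mem_univ σ, ?_⟩
    rw [occ_iff_occL, hofn]
    exact hocc

theorem bell_succ (n : ℕ) :
    bell (n + 1) = ∑ k ∈ Finset.range (n + 1), Nat.choose n k * bell k := by
  rw [bell]
  exact Finset.sum_attach (Finset.range (n + 1)) (fun k => Nat.choose n k * bell k)

theorem F_zero : F 0 = 1 := by
  have : avoSet (Finset.range 0) = {[]} := by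
    ext l
    rw [mem_avoSet, Finset.mem_singleton]
    constructor
    · rintro ⟨⟨h1, h2⟩, h3⟩
      simpa [List.toFinset_eq_empty_iff] using h2
    · rintro rfl
      exact ⟨⟨List.nodup_nil, by simp⟩, occL_nil⟩
  rw [F, this, Finset.card_singleton]

theorem F_eq_bell : ∀ n, F n = bell n := by
  intro n
  induction n using Nat.strong_induction_on with
  | _ n ih =>
    match n with
    | 0 => rw [F_zero, bell]
    | n + 1 =>
      rw [F_rec, bell_succ]
      refine Finset.sum_congr rfl fun k hk => ?_
      rw [Finset.mem_range] at hk
      rw [ih k (by omega)]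

theorem alt_inner (m k : ℕ) (hk : k ≤ m) :
    ∑ j ∈ Finset.range (m + 1), (-1 : ℤ) ^ (m - j) * (Nat.choose m j) * (Nat.choose j k) =
      if k = m then 1 else 0 := by
  have hsub : Finset.Ico k (m + 1) ⊆ Finset.range (m + 1) := by
    intro x hx; rw [Finset.mem_Ico] at hx; rw [Finset.mem_range]; omega
  rw [← Finset.sum_subset hsub (fun j hj hj2 => by
    have : j < k := by
      rw [Finset.mem_range] at hj; rw [Finset.mem_Ico] at hj2; omega
    rw [Nat.choose_eq_zero_of_lt this]; ring)]
  rw [Finset.sum_Ico_eq_sum_range]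
  have hlen : m + 1 - k = (m - k) + 1 := by omega
  set a := m - k with ha
  have key : ∀ i ∈ Finset.range (a + 1),
      (-1 : ℤ) ^ (m - (k + i)) * (Nat.choose m (k + i)) * (Nat.choose (k + i) k)
        = (Nat.choose m k : ℤ) * ((-1) ^ a * ((-1) ^ i * (Nat.choose a i))) := by
    intro i hi
    rw [Finset.mem_range] at hi
    have h1 : Nat.choose m (k + i) * Nat.choose (k + i) k
        = Nat.choose m k * Nat.choose a i := by
      rw [Nat.choose_mul (by omega : k ≤ k + i)]
      congr 2
      omega
    have h2 : m - (k + i) = a - i := by omega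
    have h3 : (-1 : ℤ) ^ (a - i) = (-1) ^ a * (-1) ^ i := by
      have h4 : (-1 : ℤ) ^ (a - i) * (-1) ^ i = (-1) ^ a := by
        rw [← pow_add]; congr 1; omega
      have h5 : (-1 : ℤ) ^ i * (-1) ^ i = 1 := by
        rw [← pow_add]; exact Even.neg_one_pow ⟨i, by omega⟩
      calc (-1 : ℤ) ^ (a - i) = (-1) ^ (a - i) * ((-1) ^ i * (-1) ^ i) := by rw [h5, mul_one]
        _ = ((-1) ^ (a - i) * (-1) ^ i) * (-1) ^ i := by ring
        _ = (-1) ^ a * (-1) ^ i := by rw [h4]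
    rw [h2, h3]
    have h1' : ((Nat.choose m (k + i) : ℤ)) * ((Nat.choose (k + i) k : ℤ))
        = (Nat.choose m k : ℤ) * (Nat.choose a i : ℤ) := by exact_mod_cast h1
    linear_combination ((-1 : ℤ) ^ a * (-1) ^ i) * h1'
  rw [hlen, Finset.sum_congr rfl key, ← Finset.mul_sum, ← Finset.mul_sum,
    Int.alternating_sum_range_choose]
  by_cases hkm : k = m
  · subst hkm
    have h0 : a = 0 := by omega
    simp [h0]
  · have h0 : a ≠ 0 := by omega
    simp [h0, hkm]

theorem bell_inversion (m : ℕ) :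
    (bell m : ℤ) = ∑ j ∈ Finset.range (m + 1),
      (-1 : ℤ) ^ (m - j) * (Nat.choose m j) * (bell (j + 1)) := by
  have hb : ∀ j, j ≤ m → (bell (j + 1) : ℤ) = ∑ k ∈ Finset.range (m + 1),
      (Nat.choose j k : ℤ) * bell k := by
    intro j hj
    rw [bell_succ j]
    push_cast
    refine Finset.sum_subset (Finset.range_subset_range.mpr (by omega : j + 1 ≤ m + 1))
      (fun k hk hk2 => ?_)
    rw [Finset.mem_range] at hk hk2
    have hjk : j < k := by omega
    simp [Nat.choose_eq_zero_of_lt hjk]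
  symm
  calc (∑ j ∈ Finset.range (m + 1), (-1 : ℤ) ^ (m - j) * (Nat.choose m j) * (bell (j + 1)))
      = ∑ j ∈ Finset.range (m + 1), ∑ k ∈ Finset.range (m + 1),
          (-1 : ℤ) ^ (m - j) * (Nat.choose m j) * ((Nat.choose j k) * bell k) := by
        refine Finset.sum_congr rfl fun j hj => ?_
        rw [Finset.mem_range] at hj
        rw [← Finset.mul_sum]
        congr 1
        exact hb j (by omega)
    _ = ∑ k ∈ Finset.range (m + 1), (bell k : ℤ) *
          ∑ j ∈ Finset.range (m + 1), (-1 : ℤ) ^ (m - j) * (Nat.choose m j) * (Nat.choose j k) := by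
        rw [Finset.sum_comm]
        refine Finset.sum_congr rfl fun k _ => ?_
        rw [Finset.mul_sum]
        exact Finset.sum_congr rfl fun j _ => by ring
    _ = (bell m : ℤ) := by
        rw [Finset.sum_congr rfl (fun k hk => by
          rw [alt_inner m k (by rw [Finset.mem_range] at hk; omega)])]
        simp

/-- The number `c(n)` of `12-3`-avoiding permutations satisfies
`c(n-1) = Σ_{j=0}^{n-1} (-1)^{n-1-j}·binom(n-1, j)·c(j+1)` for all `n ≥ 3`;
equivalently, `c(n)` equals the `n`-th Bell number. -/
theorem c12_3_rec_and_bell :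
    (∀ n : ℕ, 3 ≤ n →
      (c12_3 (n - 1) : ℤ) = ∑ j ∈ Finset.range n,
        (-1 : ℤ) ^ (n - 1 - j) * Nat.choose (n - 1) j * c12_3 (j + 1)) ∧
    (∀ n : ℕ, c12_3 n = bell n) := by
  have hbell : ∀ n, c12_3 n = bell n := fun n => by rw [c12_3_eq_F, F_eq_bell]
  refine ⟨?_, hbell⟩
  intro n hn
  obtain ⟨m, rfl⟩ : ∃ m, n = m + 1 := ⟨n - 1, by omega⟩
  simp only [Nat.add_sub_cancel]
  rw [hbell m, bell_inversion m]
  refine Finset.sum_congr rfl fun j hj => ?_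
  rw [hbell (j + 1)]
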